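/- Let X be a topological group. On the group Aut(X) of bicontinuous group automorphisms of X, the uniform structures of uniform convergence on bounded sets with respect to the left, right, and upper uniform structures of X all coincide. -/

import Mathlib

open Filter Set Pointwise

/-- A subset `A` of a topological group is (coarsely) bounded if for every
increasing exhaustive sequence of open sets `(V n)` with `V n * V n ⊆ V (n+1)`,
some `V k` contains `A`. -/
def CoarselyBdd (X : Type*) [Group X] [TopologicalSpace X] (A : Set X) : Prop :=
  ∀ V : ℕ → Set X, (∀ n, IsOpen (V n)) → (∀ n, V n ⊆ V (n + 1)) →
    (∀ n, V n * V n ⊆ V (n + 1)) → (⋃ n, V n) = Set.univ → ∃ k, A ⊆ V k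
set_option linter.unusedVariables false

/-- The group of bicontinuous automorphisms of a topological group `X`. -/
def contAut (X : Type*) [Group X] [TopologicalSpace X] : Subgroup (MulAut X) where
  carrier := {f | Continuous ⇑f ∧ Continuous ⇑f.symm}
  one_mem' := ⟨continuous_id, continuous_id⟩
  mul_mem' := fun {a b} ha hb => ⟨ha.1.comp hb.1, hb.2.comp ha.2⟩
  inv_mem' := fun {a} ha => ⟨ha.2, ha.1⟩

/-- The uniform structure (given as a uniformity filter) of uniform biconvergence on
bounded sets on `contAut X` with respect to the *upper* uniform structure of `X`,
whose entourages are generated by `{(x,y) | x⁻¹ * y ∈ V ∧ x * y⁻¹ ∈ V}`. -/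
def upperBiUniformity (X : Type*) [Group X] [TopologicalSpace X] :
    Filter (↥(contAut X) × ↥(contAut X)) :=
  ⨅ (B : Set X) (_ : CoarselyBdd X B) (V : Set X) (_ : V ∈ nhds (1 : X)),
    Filter.principal {p | ∀ x ∈ B,
      ((p.1.1 x)⁻¹ * p.2.1 x ∈ V ∧ p.1.1 x * (p.2.1 x)⁻¹ ∈ V) ∧
      ((p.1.1.symm x)⁻¹ * p.2.1.symm x ∈ V ∧ p.1.1.symm x * (p.2.1.symm x)⁻¹ ∈ V)}

/-- The uniform structure (given as a uniformity filter) of uniform biconvergence on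
bounded sets on `contAut X` with respect to the *lower (Roelcke)* uniform structure
of `X`, whose entourages are generated by `{(x,y) | x ∈ V * {y} * V}`. -/
def lowerBiUniformity (X : Type*) [Group X] [TopologicalSpace X] :
    Filter (↥(contAut X) × ↥(contAut X)) :=
  ⨅ (B : Set X) (_ : CoarselyBdd X B) (V : Set X) (_ : V ∈ nhds (1 : X)),
    Filter.principal {p | ∀ x ∈ B,
      p.1.1 x ∈ V * {p.2.1 x} * V ∧ p.1.1.symm x ∈ V * {p.2.1.symm x} * V}

/-- The topology defined by a uniformity filter `U` on `G`. -/
def topOfUniformity {G : Type*} (U : Filter (G × G)) : TopologicalSpace G where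
  IsOpen s := ∀ g ∈ s, {p : G × G | p.1 = g → p.2 ∈ s} ∈ U
  isOpen_univ := fun g _ => by simp
  isOpen_inter := by
    intro s t hs ht g hg
    filter_upwards [hs g hg.1, ht g hg.2] with p h1 h2 he
    exact ⟨h1 he, h2 he⟩
  isOpen_sUnion := by
    intro S hS g hg
    obtain ⟨s, hsS, hgs⟩ := hg
    filter_upwards [hS s hsS g hgs] with p h he
    exact ⟨s, hsS, h he⟩

/-- Uniform convergence on bounded sets w.r.t. the left uniform structure of `X`. -/
def leftConvUniformity (X : Type*) [Group X] [TopologicalSpace X] :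
    Filter (↥(contAut X) × ↥(contAut X)) :=
  ⨅ (B : Set X) (_ : CoarselyBdd X B) (V : Set X) (_ : V ∈ nhds (1 : X)),
    Filter.principal {p | ∀ x ∈ B, (p.1.1 x)⁻¹ * p.2.1 x ∈ V}

/-- Uniform convergence on bounded sets w.r.t. the right uniform structure of `X`. -/
def rightConvUniformity (X : Type*) [Group X] [TopologicalSpace X] :
    Filter (↥(contAut X) × ↥(contAut X)) :=
  ⨅ (B : Set X) (_ : CoarselyBdd X B) (V : Set X) (_ : V ∈ nhds (1 : X)),
    Filter.principal {p | ∀ x ∈ B, p.1.1 x * (p.2.1 x)⁻¹ ∈ V}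

/-- Uniform convergence on bounded sets w.r.t. the upper uniform structure of `X`. -/
def upperConvUniformity (X : Type*) [Group X] [TopologicalSpace X] :
    Filter (↥(contAut X) × ↥(contAut X)) :=
  ⨅ (B : Set X) (_ : CoarselyBdd X B) (V : Set X) (_ : V ∈ nhds (1 : X)),
    Filter.principal {p | ∀ x ∈ B, (p.1.1 x)⁻¹ * p.2.1 x ∈ V ∧ p.1.1 x * (p.2.1 x)⁻¹ ∈ V}

lemma CoarselyBdd.inv' {X : Type*} [Group X] [TopologicalSpace X] [IsTopologicalGroup X]
    {B : Set X} (h : CoarselyBdd X B) : CoarselyBdd X B⁻¹ := by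
  intro V hopen hmono hmul hunion
  have hmono' : Monotone V := monotone_nat_of_le_succ hmono
  set W : ℕ → Set X := fun n => V n ∩ (V n)⁻¹ with hW
  obtain ⟨k, hk⟩ := h W (fun n => (hopen n).inter (hopen n).inv)
    (fun n => Set.inter_subset_inter (hmono n) (Set.inv_subset_inv.2 (hmono n)))
    (by
      intro n z hz
      obtain ⟨a, ha, b, hb, rfl⟩ := hz
      refine ⟨hmul n (Set.mul_mem_mul ha.1 hb.1), ?_⟩
      have : (a * b)⁻¹ = b⁻¹ * a⁻¹ := by group
      rw [Set.mem_inv, this]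
      exact hmul n (Set.mul_mem_mul (Set.mem_inv.1 hb.2) (Set.mem_inv.1 ha.2)))
    (by
      ext x
      simp only [Set.mem_iUnion, Set.mem_univ, iff_true]
      have hx : x ∈ ⋃ n, V n := hunion ▸ Set.mem_univ x
      have hxi : x⁻¹ ∈ ⋃ n, V n := hunion ▸ Set.mem_univ x⁻¹
      obtain ⟨i, hi⟩ := Set.mem_iUnion.1 hx
      obtain ⟨j, hj⟩ := Set.mem_iUnion.1 hxi
      exact ⟨max i j, hmono' (le_max_left i j) hi,
        Set.mem_inv.2 (hmono' (le_max_right i j) hj)⟩)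
  refine ⟨k, fun x hx => ?_⟩
  have := (hk (Set.mem_inv.1 hx)).2
  simpa using this

lemma CoarselyBdd.union' {X : Type*} [Group X] [TopologicalSpace X]
    {B C : Set X} (hB : CoarselyBdd X B) (hC : CoarselyBdd X C) :
    CoarselyBdd X (B ∪ C) := by
  intro V hopen hmono hmul hunion
  have hmono' : Monotone V := monotone_nat_of_le_succ hmono
  obtain ⟨k, hk⟩ := hB V hopen hmono hmul hunion
  obtain ⟨m, hm⟩ := hC V hopen hmono hmul hunion
  exact ⟨max k m, Set.union_subset (hk.trans (hmono' (le_max_left k m)))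
    (hm.trans (hmono' (le_max_right k m)))⟩

/-- On the group of bicontinuous automorphisms of a topological group, the uniform
structures of uniform convergence on bounded sets with respect to the left, right,
and upper uniform structures of `X` all coincide. -/
theorem left_right_upper_conv_uniformities_eq {X : Type*} [Group X]
    [TopologicalSpace X] [IsTopologicalGroup X] :
    leftConvUniformity X = rightConvUniformity X ∧
    leftConvUniformity X = upperConvUniformity X := by
  have hLle : ∀ (B : Set X) (hB : CoarselyBdd X B) (V : Set X) (hV : V ∈ nhds (1 : X)),
      leftConvUniformity X ≤
        Filter.principal {p : ↥(contAut X) × ↥(contAut X) |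
          ∀ x ∈ B, (p.1.1 x)⁻¹ * p.2.1 x ∈ V} := by
    intro B hB V hV
    exact le_trans (iInf_le _ B) (le_trans (iInf_le _ hB)
      (le_trans (iInf_le _ V) (iInf_le _ hV)))
  have hRle : ∀ (B : Set X) (hB : CoarselyBdd X B) (V : Set X) (hV : V ∈ nhds (1 : X)),
      rightConvUniformity X ≤
        Filter.principal {p : ↥(contAut X) × ↥(contAut X) |
          ∀ x ∈ B, p.1.1 x * (p.2.1 x)⁻¹ ∈ V} := by
    intro B hB V hV
    exact le_trans (iInf_le _ B) (le_trans (iInf_le _ hB)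
      (le_trans (iInf_le _ V) (iInf_le _ hV)))
  have hUle : ∀ (B : Set X) (hB : CoarselyBdd X B) (V : Set X) (hV : V ∈ nhds (1 : X)),
      upperConvUniformity X ≤
        Filter.principal {p : ↥(contAut X) × ↥(contAut X) |
          ∀ x ∈ B, (p.1.1 x)⁻¹ * p.2.1 x ∈ V ∧ p.1.1 x * (p.2.1 x)⁻¹ ∈ V} := by
    intro B hB V hV
    exact le_trans (iInf_le _ B) (le_trans (iInf_le _ hB)
      (le_trans (iInf_le _ V) (iInf_le _ hV)))
  have hLR : leftConvUniformity X ≤ rightConvUniformity X := by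
    refine le_iInf fun B => le_iInf fun hB => le_iInf fun V => le_iInf fun hV => ?_
    refine le_trans (hLle B⁻¹ hB.inv' V hV) (Filter.principal_mono.2 ?_)
    intro p hp x hx
    have hxB : x⁻¹ ∈ B⁻¹ := by simpa using hx
    have := hp x⁻¹ hxB
    simpa [map_inv] using this
  have hRL : rightConvUniformity X ≤ leftConvUniformity X := by
    refine le_iInf fun B => le_iInf fun hB => le_iInf fun V => le_iInf fun hV => ?_
    refine le_trans (hRle B⁻¹ hB.inv' V hV) (Filter.principal_mono.2 ?_)
    intro p hp x hx
    have hxB : x⁻¹ ∈ B⁻¹ := by simpa using hx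
    have := hp x⁻¹ hxB
    simpa [map_inv] using this
  have hUL : upperConvUniformity X ≤ leftConvUniformity X := by
    refine le_iInf fun B => le_iInf fun hB => le_iInf fun V => le_iInf fun hV => ?_
    refine le_trans (hUle B hB V hV) (Filter.principal_mono.2 ?_)
    exact fun p hp x hx => (hp x hx).1
  have hLU : leftConvUniformity X ≤ upperConvUniformity X := by
    refine le_iInf fun B => le_iInf fun hB => le_iInf fun V => le_iInf fun hV => ?_
    refine le_trans (hLle (B ∪ B⁻¹) (hB.union' hB.inv') V hV) (Filter.principal_mono.2 ?_)
    intro p hp x hx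
    refine ⟨hp x (Or.inl hx), ?_⟩
    have hxB : x⁻¹ ∈ B ∪ B⁻¹ := Or.inr (by simpa using hx)
    have := hp x⁻¹ hxB
    simpa [map_inv] using this
  exact ⟨le_antisymm hLR hRL, le_antisymm hLU hUL⟩
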